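/- Let m₁ be a natural number, let s be a finite index set, let k_j be real numbers with ∑_{j∈s} k_j = 1, let p_j be real numbers, and set p = ∑_{j∈s} k_j p_j. Then ∑_{j∈s} k_j · ∑_{n=0}^{m₁} C(m₁,n) p_j^n (1−p_j)^(m₁−n) · (n − m₁·p)² = m₁·p(1−p) + m₁(m₁−1) · ∑_{j∈s} k_j (p_j − p)². -/

import Mathlib

open Finset in
lemma binmom (m : ℕ) (q c : ℝ) :
    ∑ n ∈ range (m + 1), (m.choose n : ℝ) * q ^ n * (1 - q) ^ (m - n) * ((n : ℝ) - c) ^ 2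
      = (m : ℝ) * q * (1 - q) + ((m : ℝ) * q - c) ^ 2 := by
  have h0 := congrArg (Polynomial.eval q) (bernsteinPolynomial.sum ℝ m)
  have h1 := congrArg (Polynomial.eval q) (bernsteinPolynomial.sum_smul ℝ m)
  have h2 := congrArg (Polynomial.eval q) (bernsteinPolynomial.sum_mul_smul ℝ m)
  simp only [Polynomial.eval_finset_sum, bernsteinPolynomial, nsmul_eq_mul, Polynomial.eval_mul,
    Polynomial.eval_pow, Polynomial.eval_natCast, Polynomial.eval_sub, Polynomial.eval_one,
    Polynomial.eval_X, Polynomial.eval_one] at h0 h1 h2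
  have h2' : ∑ n ∈ range (m + 1),
      ((n : ℝ) ^ 2 - n) * ((m.choose n : ℝ) * q ^ n * (1 - q) ^ (m - n))
        = ((m : ℝ) ^ 2 - m) * q ^ 2 := by
    have e1 : ∀ n : ℕ, ((n * (n - 1) : ℕ) : ℝ) = (n : ℝ) ^ 2 - n := by
      rintro (_ | n) <;> push_cast <;> ring
    calc ∑ n ∈ range (m + 1), ((n : ℝ) ^ 2 - n) * ((m.choose n : ℝ) * q ^ n * (1 - q) ^ (m - n))
        = ∑ n ∈ range (m + 1), ((n * (n - 1) : ℕ) : ℝ) * ((m.choose n : ℝ) * q ^ n * (1 - q) ^ (m - n)) := by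
          refine Finset.sum_congr rfl fun n _ => ?_; rw [e1]
      _ = ((m * (m - 1) : ℕ) : ℝ) * q ^ 2 := h2
      _ = ((m : ℝ) ^ 2 - m) * q ^ 2 := by rw [e1]
  have h1' : ∑ n ∈ range (m + 1),
      (n : ℝ) * ((m.choose n : ℝ) * q ^ n * (1 - q) ^ (m - n)) = m * q := by
    exact h1
  calc ∑ n ∈ range (m + 1), (m.choose n : ℝ) * q ^ n * (1 - q) ^ (m - n) * ((n : ℝ) - c) ^ 2
      = ∑ n ∈ range (m + 1),
          (((n : ℝ) ^ 2 - n) * ((m.choose n : ℝ) * q ^ n * (1 - q) ^ (m - n))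
            + (1 - 2 * c) * ((n : ℝ) * ((m.choose n : ℝ) * q ^ n * (1 - q) ^ (m - n)))
            + c ^ 2 * ((m.choose n : ℝ) * q ^ n * (1 - q) ^ (m - n))) := by
        refine Finset.sum_congr rfl fun n _ => ?_; ring
    _ = ((m : ℝ) ^ 2 - m) * q ^ 2 + (1 - 2 * c) * ((m : ℝ) * q) + c ^ 2 * 1 := by
        rw [Finset.sum_add_distrib, Finset.sum_add_distrib, h2', ← Finset.mul_sum, h1',
          ← Finset.mul_sum, h0]
    _ = (m : ℝ) * q * (1 - q) + ((m : ℝ) * q - c) ^ 2 := by ring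

theorem stmt_10 {ι : Type*} (m₁ : ℕ) (s : Finset ι) (k p : ι → ℝ)
    (hk : ∑ j ∈ s, k j = 1) :
    ∑ j ∈ s, k j * ∑ n ∈ Finset.range (m₁ + 1),
        (m₁.choose n : ℝ) * (p j) ^ n * (1 - p j) ^ (m₁ - n)
          * ((n : ℝ) - (m₁ : ℝ) * ∑ i ∈ s, k i * p i) ^ 2
      = (m₁ : ℝ) * (∑ i ∈ s, k i * p i) * (1 - ∑ i ∈ s, k i * p i)
        + (m₁ : ℝ) * ((m₁ : ℝ) - 1) * ∑ j ∈ s, k j * (p j - ∑ i ∈ s, k i * p i) ^ 2 := by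
  set P := ∑ i ∈ s, k i * p i with hP
  have L : ∑ j ∈ s, k j * ∑ n ∈ Finset.range (m₁ + 1),
      (m₁.choose n : ℝ) * (p j) ^ n * (1 - p j) ^ (m₁ - n) * ((n : ℝ) - (m₁ : ℝ) * P) ^ 2
      = ∑ j ∈ s, k j * ((m₁ : ℝ) * p j * (1 - p j) + ((m₁ : ℝ) * p j - (m₁ : ℝ) * P) ^ 2) := by
    refine Finset.sum_congr rfl fun j _ => ?_
    rw [binmom m₁ (p j) ((m₁ : ℝ) * P)]
  rw [L]
  have expand : ∀ j ∈ s, k j * ((m₁ : ℝ) * p j * (1 - p j) + ((m₁ : ℝ) * p j - (m₁ : ℝ) * P) ^ 2)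
      = (m₁ : ℝ) * (k j * p j) - (m₁ : ℝ) * (k j * p j ^ 2)
        + (m₁ : ℝ) ^ 2 * (k j * p j ^ 2) - 2 * (m₁ : ℝ) ^ 2 * P * (k j * p j)
        + (m₁ : ℝ) ^ 2 * P ^ 2 * k j := fun j _ => by ring
  rw [Finset.sum_congr rfl expand]
  have expand2 : ∀ j ∈ s, k j * (p j - P) ^ 2
      = k j * p j ^ 2 - 2 * P * (k j * p j) + P ^ 2 * k j := fun j _ => by ring
  rw [Finset.sum_congr rfl expand2]
  simp only [Finset.sum_add_distrib, Finset.sum_sub_distrib, ← Finset.mul_sum, ← hP, hk]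
  ring
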